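/- Let $\delta \le \Delta$ be powers of $p^{-1}$ and let $\mathcal{P}$ be a multiset of points such that for every ball $Q$ of radius $r$ with $\Delta \le r \le 1$ one has $|\mathcal{P} \cap Q| \le K r |\mathcal{P}|$. For a tube $T$ of width $\delta$ and a parameter $b \ge 1$, let $N_{\Delta,b}(T)$ denote the number of $\Delta$-cubes $Q$ with $|T \cap Q \cap \mathcal{P}| \ge b$. Then $\sum_{T : N_{\Delta,b}(T) \ge 2} N_{\Delta,b}(T)^2 \lesssim K \log(1/\Delta) \cdot |\mathcal{P}|^2 / b^2$, where the sum is over all dyadic $\delta$-tubes. -/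

import Mathlib

open scoped Classical

noncomputable section

/-- A `δ`-tube in `ℤ_p²`: the `δ`-neighborhood of the line `y = a x + b`. -/
def tube (p : ℕ) [Fact p.Prime] (δ : ℝ) (a b : ℤ_[p]) : Set (ℤ_[p] × ℤ_[p]) :=
  {z | ‖z.2 - (a * z.1 + b)‖ ≤ δ}

/-- The collection of (dyadic) `δ`-tubes. -/
def tubes (p : ℕ) [Fact p.Prime] (δ : ℝ) : Set (Set (ℤ_[p] × ℤ_[p])) :=
  {T | ∃ a b, T = tube p δ a b}

/-- The number of points of the multiset `P` lying in the set `A` (with multiplicity). -/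
def mcount (p : ℕ) [Fact p.Prime] (P : Multiset (ℤ_[p] × ℤ_[p])) (A : Set (ℤ_[p] × ℤ_[p])) : ℕ :=
  (P.filter (· ∈ A)).card

/-- The collection of `Δ`-cubes (p-adic balls of radius `Δ`). -/
def cubes (p : ℕ) [Fact p.Prime] (Δ : ℝ) : Set (Set (ℤ_[p] × ℤ_[p])) :=
  {Q | ∃ x, Q = Metric.closedBall x Δ}

/-- The `Δ`-cubes meeting the multiset `P` (the set `𝔻_Δ(P)`). -/
def cubesOf (p : ℕ) [Fact p.Prime] (Δ : ℝ) (P : Multiset (ℤ_[p] × ℤ_[p])) :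
    Set (Set (ℤ_[p] × ℤ_[p])) :=
  {Q | Q ∈ cubes p Δ ∧ 0 < mcount p P Q}

/-- `NDb p Δ P b T` : the number of `Δ`-cubes `Q` with `|T ∩ Q ∩ P| ≥ b`. -/
def NDb (p : ℕ) [Fact p.Prime] (Δ : ℝ) (P : Multiset (ℤ_[p] × ℤ_[p])) (b : ℕ)
    (T : Set (ℤ_[p] × ℤ_[p])) : ℕ :=
  Set.ncard {Q | Q ∈ cubes p Δ ∧ b ≤ mcount p P (T ∩ Q)}

/-- The closed `w`-neighborhood (thickening) of a set in `ℤ_p²`. -/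
def thicken (p : ℕ) [Fact p.Prime] (A : Set (ℤ_[p] × ℤ_[p])) (w : ℝ) : Set (ℤ_[p] × ℤ_[p]) :=
  {z | ∃ y ∈ A, dist z y ≤ w}

/-! ### Auxiliary lemmas -/

section Aux

variable {p : ℕ} [Fact p.Prime]

lemma padicDvd_iff (x : ℤ_[p]) (j : ℕ) : ‖x‖ ≤ (p:ℝ)^(-(j:ℤ)) ↔ (p:ℤ_[p])^j ∣ x := by
  rw [PadicInt.norm_le_pow_iff_mem_span_pow, Ideal.mem_span_singleton]

lemma norm_exists_scale (x : ℤ_[p]) (hx : x ≠ 0) : ∃ k : ℕ, ‖x‖ = (p:ℝ)^(-(k:ℤ)) := by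
  refine ⟨x.valuation, ?_⟩
  rw [PadicInt.norm_eq_zpow_neg_valuation hx]

lemma dist_le_one' (z w : ℤ_[p] × ℤ_[p]) : dist z w ≤ 1 := by
  rw [Prod.dist_eq]
  refine max_le ?_ ?_ <;> rw [dist_eq_norm] <;> exact PadicInt.norm_le_one _

lemma exists_scale (z w : ℤ_[p] × ℤ_[p]) (h : 0 < dist z w) :
    ∃ k : ℕ, dist z w = (p:ℝ)^(-(k:ℤ)) := by
  rw [Prod.dist_eq] at h ⊢
  rcases max_cases (dist z.1 w.1) (dist z.2 w.2) with ⟨he, _⟩ | ⟨he, _⟩ <;> rw [he] at h ⊢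
  · have hne : z.1 - w.1 ≠ 0 := by
      intro h0; rw [dist_eq_norm, h0, norm_zero] at h; exact lt_irrefl _ h
    rw [dist_eq_norm]; exact norm_exists_scale _ hne
  · have hne : z.2 - w.2 ≠ 0 := by
      intro h0; rw [dist_eq_norm, h0, norm_zero] at h; exact lt_irrefl _ h
    rw [dist_eq_norm]; exact norm_exists_scale _ hne

lemma mem_tube_iff {n : ℕ} {a b : ℤ_[p]} {z : ℤ_[p] × ℤ_[p]} :
    z ∈ tube p ((p:ℝ)^(-(n:ℤ))) a b ↔ (p:ℤ_[p])^n ∣ z.2 - (a * z.1 + b) := by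
  rw [tube, Set.mem_setOf_eq, padicDvd_iff]

lemma tube_congr {n : ℕ} {a b a' b' : ℤ_[p]} (ha : (p:ℤ_[p])^n ∣ a - a')
    (hb : (p:ℤ_[p])^n ∣ b - b') :
    tube p ((p:ℝ)^(-(n:ℤ))) a b = tube p ((p:ℝ)^(-(n:ℤ))) a' b' := by
  ext z
  rw [mem_tube_iff, mem_tube_iff]
  constructor <;> intro h
  · have : z.2 - (a' * z.1 + b') = (z.2 - (a * z.1 + b)) + ((a - a') * z.1 + (b - b')) := by ring
    rw [this]; exact dvd_add h (dvd_add (ha.mul_right _) hb)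
  · have : z.2 - (a * z.1 + b) = (z.2 - (a' * z.1 + b')) - ((a - a') * z.1 + (b - b')) := by ring
    rw [this]; exact dvd_sub h (dvd_add (ha.mul_right _) hb)

/-- A finite family covering all dyadic δ-tubes. -/
def tubeFinset (p : ℕ) [Fact p.Prime] (n : ℕ) : Finset (Set (ℤ_[p] × ℤ_[p])) :=
  (Finset.range (p^n) ×ˢ Finset.range (p^n)).image
    fun ij => tube p ((p:ℝ)^(-(n:ℤ))) (ij.1 : ℤ_[p]) (ij.2 : ℤ_[p])

lemma appr_dvd (a : ℤ_[p]) (n : ℕ) : (p:ℤ_[p])^n ∣ a - (a.appr n : ℤ_[p]) := by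
  have := PadicInt.appr_spec n a
  rwa [Ideal.mem_span_singleton] at this

lemma coe_tubeFinset (n : ℕ) : (↑(tubeFinset p n) : Set (Set (ℤ_[p] × ℤ_[p]))) =
    tubes p ((p:ℝ)^(-(n:ℤ))) := by
  ext T
  simp only [tubeFinset, Finset.coe_image, Set.mem_image, Finset.mem_coe,
    Finset.mem_product, Finset.mem_range, tubes, Set.mem_setOf_eq]
  constructor
  · rintro ⟨⟨i, j⟩, _, rfl⟩; exact ⟨_, _, rfl⟩
  · rintro ⟨a, b, rfl⟩
    refine ⟨(a.appr n, b.appr n), ⟨PadicInt.appr_lt a n, PadicInt.appr_lt b n⟩, ?_⟩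
    exact (tube_congr (appr_dvd a n) (appr_dvd b n)).symm

lemma mem_cube_iff {m : ℕ} {x z : ℤ_[p] × ℤ_[p]} :
    z ∈ Metric.closedBall x ((p:ℝ)^(-(m:ℤ))) ↔
      (p:ℤ_[p])^m ∣ z.1 - x.1 ∧ (p:ℤ_[p])^m ∣ z.2 - x.2 := by
  rw [Metric.mem_closedBall, Prod.dist_eq, max_le_iff, dist_eq_norm, dist_eq_norm,
    padicDvd_iff, padicDvd_iff]

lemma cube_eq {m : ℕ} {Q : Set (ℤ_[p] × ℤ_[p])} (hQ : Q ∈ cubes p ((p:ℝ)^(-(m:ℤ))))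
    {z : ℤ_[p] × ℤ_[p]} (hz : z ∈ Q) : Q = Metric.closedBall z ((p:ℝ)^(-(m:ℤ))) := by
  obtain ⟨x, rfl⟩ := hQ
  rw [mem_cube_iff] at hz
  ext y
  rw [mem_cube_iff, mem_cube_iff]
  constructor <;> rintro ⟨h1, h2⟩
  · constructor
    · have : y.1 - z.1 = (y.1 - x.1) - (z.1 - x.1) := by ring
      rw [this]; exact dvd_sub h1 hz.1
    · have : y.2 - z.2 = (y.2 - x.2) - (z.2 - x.2) := by ring
      rw [this]; exact dvd_sub h2 hz.2
  · constructor
    · have : y.1 - x.1 = (y.1 - z.1) + (z.1 - x.1) := by ring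
      rw [this]; exact dvd_add h1 hz.1
    · have : y.2 - x.2 = (y.2 - z.2) + (z.2 - x.2) := by ring
      rw [this]; exact dvd_add h2 hz.2

lemma cube_unique {m : ℕ} {Q Q' : Set (ℤ_[p] × ℤ_[p])} (hQ : Q ∈ cubes p ((p:ℝ)^(-(m:ℤ))))
    (hQ' : Q' ∈ cubes p ((p:ℝ)^(-(m:ℤ)))) {z : ℤ_[p] × ℤ_[p]} (hz : z ∈ Q) (hz' : z ∈ Q') :
    Q = Q' := by
  rw [cube_eq hQ hz, cube_eq hQ' hz']

lemma cube_dist {m : ℕ} {Q Q' : Set (ℤ_[p] × ℤ_[p])} (hQ : Q ∈ cubes p ((p:ℝ)^(-(m:ℤ))))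
    (hQ' : Q' ∈ cubes p ((p:ℝ)^(-(m:ℤ)))) (hne : Q ≠ Q') {z w : ℤ_[p] × ℤ_[p]}
    (hz : z ∈ Q) (hw : w ∈ Q') : (p:ℝ)^(-(m:ℤ)) < dist z w := by
  by_contra hle
  push_neg at hle
  apply hne
  have hwz : w ∈ Metric.closedBall z ((p:ℝ)^(-(m:ℤ))) := by
    rw [Metric.mem_closedBall, dist_comm]; exact hle
  rw [cube_eq hQ hz, cube_eq hQ' hw]
  exact cube_eq (⟨z, rfl⟩ : Metric.closedBall z ((p:ℝ)^(-(m:ℤ))) ∈ cubes p _) hwz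

lemma mcount_eq_sum (P : Multiset (ℤ_[p] × ℤ_[p])) (A : Set (ℤ_[p] × ℤ_[p])) :
    mcount p P A = ∑ z ∈ P.toFinset, if z ∈ A then P.count z else 0 := by
  rw [mcount, ← Multiset.toFinset_sum_count_eq]
  rw [Finset.sum_subset (Multiset.toFinset_subset.2 (Multiset.subset_of_le
    (Multiset.filter_le _ _)))]
  · exact Finset.sum_congr rfl fun z _ => Multiset.count_filter
  · intro x _ hx
    simpa [Multiset.count_eq_zero] using hx

lemma card_eq_sum (P : Multiset (ℤ_[p] × ℤ_[p])) :
    Multiset.card P = ∑ z ∈ P.toFinset, P.count z := (Multiset.toFinset_sum_count_eq P).symm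

lemma dvd_of_mem_both {n : ℕ} {a b : ℤ_[p]} {z w : ℤ_[p] × ℤ_[p]}
    (hz : z ∈ tube p ((p:ℝ)^(-(n:ℤ))) a b) (hw : w ∈ tube p ((p:ℝ)^(-(n:ℤ))) a b) :
    (p:ℤ_[p])^n ∣ (z.2 - w.2) - a * (z.1 - w.1) := by
  rw [mem_tube_iff] at hz hw
  have : (z.2 - w.2) - a * (z.1 - w.1)
      = (z.2 - (a * z.1 + b)) - (w.2 - (a * w.1 + b)) := by ring
  rw [this]; exact dvd_sub hz hw

lemma dvd_of_norm_mul {n k : ℕ} (hkn : k ≤ n) {x u : ℤ_[p]} (hu : ‖u‖ = (p:ℝ)^(-(k:ℤ)))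
    (h : (p:ℤ_[p])^n ∣ x * u) : (p:ℤ_[p])^(n-k) ∣ x := by
  have hp1 : (1:ℝ) < p := by exact_mod_cast (Fact.out : p.Prime).one_lt
  have hp0 : (p:ℝ) ≠ 0 := by positivity
  rw [← padicDvd_iff] at h
  rw [norm_mul, hu] at h
  rw [← padicDvd_iff]
  have hcast : (-( (n-k : ℕ) : ℤ)) = -(n:ℤ) + k := by
    have : ((n-k : ℕ) : ℤ) = (n:ℤ) - k := by exact_mod_cast Int.ofNat_sub hkn
    rw [this]; ring
  rw [hcast, zpow_add₀ hp0]
  have hpk : (0:ℝ) < (p:ℝ)^((k:ℤ)) := by positivity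
  have := mul_le_mul_of_nonneg_right h (le_of_lt hpk)
  calc ‖x‖ = ‖x‖ * ((p:ℝ)^(-(k:ℤ)) * (p:ℝ)^((k:ℤ))) := by
        rw [← zpow_add₀ hp0]; norm_num
    _ = ‖x‖ * (p:ℝ)^(-(k:ℤ)) * (p:ℝ)^((k:ℤ)) := by ring
    _ ≤ (p:ℝ)^(-(n:ℤ)) * (p:ℝ)^((k:ℤ)) := this

lemma tubecount {n m k : ℕ} (hmn : m ≤ n) (hk : k < m) {z w : ℤ_[p] × ℤ_[p]}
    (hdist : dist z w = (p:ℝ)^(-(k:ℤ))) :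
    ((tubeFinset p n).filter (fun T => z ∈ T ∧ w ∈ T)).card ≤ p^k := by
  have hp1 : (1:ℝ) < p := by exact_mod_cast (Fact.out : p.Prime).one_lt
  have hkn : k ≤ n := le_trans (le_of_lt hk) hmn
  set u := z.1 - w.1 with hu_def
  set d := z.2 - w.2 with hd_def
  have hmem : ∀ T ∈ (tubeFinset p n).filter (fun T => z ∈ T ∧ w ∈ T),
      ∃ a b : ℤ_[p], T = tube p ((p:ℝ)^(-(n:ℤ))) a b ∧ (p:ℤ_[p])^n ∣ d - a * u := by
    intro T hT
    rw [Finset.mem_filter] at hT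
    obtain ⟨hT1, hz, hw⟩ := hT
    rw [tubeFinset, Finset.mem_image] at hT1
    obtain ⟨⟨i, j⟩, _, rfl⟩ := hT1
    exact ⟨i, j, rfl, dvd_of_mem_both hz hw⟩
  rw [Prod.dist_eq, dist_eq_norm, dist_eq_norm, ← hu_def, ← hd_def] at hdist
  rcases max_cases ‖u‖ ‖d‖ with ⟨he, _⟩ | ⟨he, hlt⟩
  · rw [he] at hdist
    rcases Finset.eq_empty_or_nonempty ((tubeFinset p n).filter (fun T => z ∈ T ∧ w ∈ T)) with
      hE | ⟨T₀, hT₀⟩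
    · rw [hE]; simp
    obtain ⟨a₀, b₀, hT₀eq, ha₀⟩ := hmem T₀ hT₀
    set Ex := fun T : Set (ℤ_[p] × ℤ_[p]) => ∃ c : ℤ_[p],
      T = tube p ((p:ℝ)^(-(n:ℤ))) (a₀ + (p:ℤ_[p])^(n-k) * c)
        (z.2 - (a₀ + (p:ℤ_[p])^(n-k) * c) * z.1) with hEx_def
    have hEx : ∀ T ∈ (tubeFinset p n).filter (fun T => z ∈ T ∧ w ∈ T), Ex T := by
      intro T hT
      obtain ⟨a, b, rfl, ha⟩ := hmem T hT
      have hdvd : (p:ℤ_[p])^n ∣ (a - a₀) * u := by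
        have : (a - a₀) * u = (d - a₀ * u) - (d - a * u) := by ring
        rw [this]; exact dvd_sub ha₀ ha
      obtain ⟨c, hc⟩ := dvd_of_norm_mul hkn hdist hdvd
      refine ⟨c, ?_⟩
      have haeq : a = a₀ + (p:ℤ_[p])^(n-k) * c := by
        rw [← hc]; ring
      rw [← haeq]
      apply tube_congr (by simp)
      rw [Finset.mem_filter] at hT
      have hz := hT.2.1
      rw [mem_tube_iff] at hz
      have : b - (z.2 - a * z.1) = -(z.2 - (a * z.1 + b)) := by ring
      rw [this]; exact dvd_neg.2 hz
    have hinj : ∀ T, Ex T → ∀ T', Ex T' →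
        (fun T => if h : Ex T then (Classical.choose h).appr k else 0) T =
        (fun T => if h : Ex T then (Classical.choose h).appr k else 0) T' → T = T' := by
      intro T hT T' hT' heq
      simp only [dif_pos hT, dif_pos hT'] at heq
      obtain hc := Classical.choose_spec hT
      obtain hc' := Classical.choose_spec hT'
      set c := Classical.choose hT
      set c' := Classical.choose hT'
      have hdvd : (p:ℤ_[p])^k ∣ c - c' := by
        have : c - c' = (c - (c.appr k : ℤ_[p])) - (c' - (c'.appr k : ℤ_[p]))
            + (((c.appr k : ℕ) : ℤ_[p]) - ((c'.appr k : ℕ) : ℤ_[p])) := by ring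
        have h0 : ((c.appr k : ℕ) : ℤ_[p]) - ((c'.appr k : ℕ) : ℤ_[p]) = 0 := by
          rw [heq, sub_self]
        rw [this, h0, add_zero]
        exact dvd_sub (appr_dvd c k) (appr_dvd c' k)
      obtain ⟨e, he⟩ := hdvd
      have hdvda : (p:ℤ_[p])^n ∣ (a₀ + (p:ℤ_[p])^(n-k) * c) - (a₀ + (p:ℤ_[p])^(n-k) * c') := by
        have h1 : (a₀ + (p:ℤ_[p])^(n-k) * c) - (a₀ + (p:ℤ_[p])^(n-k) * c')
            = (p:ℤ_[p])^(n-k) * (c - c') := by ring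
        rw [h1, he, ← mul_assoc, ← pow_add, Nat.sub_add_cancel hkn]
        exact Dvd.intro e rfl
      rw [hc, hc']
      apply tube_congr hdvda
      have : z.2 - (a₀ + (p:ℤ_[p])^(n-k) * c) * z.1 - (z.2 - (a₀ + (p:ℤ_[p])^(n-k) * c') * z.1)
          = -(((a₀ + (p:ℤ_[p])^(n-k) * c) - (a₀ + (p:ℤ_[p])^(n-k) * c')) * z.1) := by ring
      rw [this]
      exact dvd_neg.2 (hdvda.mul_right _)
    calc ((tubeFinset p n).filter (fun T => z ∈ T ∧ w ∈ T)).card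
        ≤ (Finset.range (p^k)).card := by
          apply Finset.card_le_card_of_injOn
            (fun T => if h : Ex T then (Classical.choose h).appr k else 0)
          · intro T hT
            beta_reduce
            rw [dif_pos (hEx T hT), Finset.mem_coe, Finset.mem_range]
            exact PadicInt.appr_lt _ k
          · intro T hT T' hT' heq
            exact hinj T (hEx T hT) T' (hEx T' hT') heq
      _ = p^k := Finset.card_range _
  · rw [he] at hdist
    have hempty : (tubeFinset p n).filter (fun T => z ∈ T ∧ w ∈ T) = ∅ := by
      rw [Finset.eq_empty_iff_forall_notMem]
      intro T hT
      obtain ⟨a, b, rfl, ha⟩ := hmem T hT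
      have h1 : ‖d - a * u‖ ≤ (p:ℝ)^(-(n:ℤ)) := (padicDvd_iff _ n).2 ha
      have h2 : ‖a * u‖ < (p:ℝ)^(-(k:ℤ)) := by
        rw [norm_mul]
        calc ‖a‖ * ‖u‖ ≤ 1 * ‖u‖ := by
              apply mul_le_mul_of_nonneg_right (PadicInt.norm_le_one a) (norm_nonneg u)
          _ = ‖u‖ := one_mul _
          _ < (p:ℝ)^(-(k:ℤ)) := by rw [← hdist]; exact hlt
      have h3 : ‖d‖ < (p:ℝ)^(-(k:ℤ)) := by
        have hd4 : d = (d - a * u) + a * u := by ring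
        rw [hd4]
        calc ‖(d - a*u) + a*u‖ ≤ max ‖d - a*u‖ ‖a*u‖ := PadicInt.nonarchimedean _ _
          _ < (p:ℝ)^(-(k:ℤ)) := by
              apply max_lt _ h2
              calc ‖d - a*u‖ ≤ (p:ℝ)^(-(n:ℤ)) := h1
                _ < (p:ℝ)^(-(k:ℤ)) := by
                    apply zpow_lt_zpow_right₀ hp1
                    omega
      rw [hdist] at h3
      exact lt_irrefl _ h3
    rw [hempty]; simp

lemma stepA {m : ℕ} (P : Multiset (ℤ_[p] × ℤ_[p])) (b : ℕ) (hb : 1 ≤ b)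
    (T : Set (ℤ_[p] × ℤ_[p])) (h2 : 2 ≤ NDb p ((p:ℝ)^(-(m:ℤ))) P b T) :
    b^2 * (NDb p ((p:ℝ)^(-(m:ℤ))) P b T)^2 ≤
      2 * ∑ z ∈ P.toFinset, ∑ w ∈ P.toFinset,
        if z ∈ T ∧ w ∈ T ∧ (p:ℝ)^(-(m:ℤ)) < dist z w then P.count z * P.count w else 0 := by
  set Δ : ℝ := (p:ℝ)^(-(m:ℤ)) with hΔ_def
  set R := {Q | Q ∈ cubes p Δ ∧ b ≤ mcount p P (T ∩ Q)} with hR_def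
  have hpt : ∀ Q ∈ R, ∃ x, x ∈ P ∧ x ∈ T ∩ Q := by
    intro Q hQ
    have hcard : 0 < mcount p P (T ∩ Q) := lt_of_lt_of_le hb hQ.2
    unfold mcount at hcard
    obtain ⟨x, hx⟩ := Multiset.card_pos_iff_exists_mem.1 hcard
    exact ⟨x, @Multiset.mem_of_mem_filter _ _ (fun a => Classical.propDecidable _) _ _ hx,
      @Multiset.of_mem_filter _ _ (fun a => Classical.propDecidable _) _ _ hx⟩
  set f : Set (ℤ_[p] × ℤ_[p]) → ℤ_[p] × ℤ_[p] :=
    fun Q => if h : ∃ x, x ∈ P ∧ x ∈ T ∩ Q then h.choose else 0 with hf_def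
  have hfP : ∀ Q ∈ R, f Q ∈ P ∧ f Q ∈ T ∩ Q := by
    intro Q hQ
    have h := hpt Q hQ
    simp only [hf_def, dif_pos h]
    exact h.choose_spec
  have hfin : R.Finite := by
    apply Set.Finite.of_finite_image (f := f)
    · apply Set.Finite.subset (P.toFinset.finite_toSet)
      rintro - ⟨Q, hQ, rfl⟩
      simpa using (hfP Q hQ).1
    · intro Q hQ Q' hQ' heq
      apply cube_unique hQ.1 hQ'.1 ((hfP Q hQ).2.2) (heq ▸ (hfP Q' hQ').2.2)
  set F := hfin.toFinset with hF_def
  have hmemF : ∀ Q, Q ∈ F ↔ Q ∈ R := fun Q => hfin.mem_toFinset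
  have hNcard : NDb p Δ P b T = F.card := Set.ncard_eq_toFinset_card R hfin
  set N := NDb p Δ P b T with hN_def
  have key1 : ∀ qq ∈ F.offDiag,
      b * b ≤ ∑ z ∈ P.toFinset, ∑ w ∈ P.toFinset,
        if (z ∈ T ∧ z ∈ qq.1) ∧ (w ∈ T ∧ w ∈ qq.2) then P.count z * P.count w else 0 := by
    rintro ⟨Q, Q'⟩ hqq
    rw [Finset.mem_offDiag] at hqq
    have hQ : Q ∈ R := (hmemF Q).1 hqq.1
    have hQ' : Q' ∈ R := (hmemF Q').1 hqq.2.1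
    have heq : ∑ z ∈ P.toFinset, ∑ w ∈ P.toFinset,
        (if (z ∈ T ∧ z ∈ Q) ∧ (w ∈ T ∧ w ∈ Q') then P.count z * P.count w else 0)
        = mcount p P (T ∩ Q) * mcount p P (T ∩ Q') := by
      rw [mcount_eq_sum, mcount_eq_sum, Finset.sum_mul_sum]
      refine Finset.sum_congr rfl fun z _ => Finset.sum_congr rfl fun w _ => ?_
      simp only [Set.mem_inter_iff]
      split_ifs with h1 h2 h3 h4 h5 <;> simp_all
    rw [heq]
    exact Nat.mul_le_mul hQ.2 hQ'.2
  have key2 : ∑ qq ∈ F.offDiag, (∑ z ∈ P.toFinset, ∑ w ∈ P.toFinset,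
        if (z ∈ T ∧ z ∈ qq.1) ∧ (w ∈ T ∧ w ∈ qq.2) then P.count z * P.count w else 0)
      ≤ ∑ z ∈ P.toFinset, ∑ w ∈ P.toFinset,
        if z ∈ T ∧ w ∈ T ∧ Δ < dist z w then P.count z * P.count w else 0 := by
    rw [Finset.sum_comm]
    refine Finset.sum_le_sum fun z _ => ?_
    rw [Finset.sum_comm]
    refine Finset.sum_le_sum fun w _ => ?_
    by_cases hex : ∃ qq ∈ F.offDiag, (z ∈ T ∧ z ∈ qq.1) ∧ (w ∈ T ∧ w ∈ qq.2)
    · obtain ⟨qq₀, hqq₀, hcond⟩ := hex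
      have hoff := Finset.mem_offDiag.1 hqq₀
      have hQ₀ : qq₀.1 ∈ R := (hmemF _).1 hoff.1
      have hQ₀' : qq₀.2 ∈ R := (hmemF _).1 hoff.2.1
      rw [Finset.sum_eq_single qq₀]
      · rw [if_pos hcond, if_pos]
        exact ⟨hcond.1.1, hcond.2.1, cube_dist hQ₀.1 hQ₀'.1 hoff.2.2 hcond.1.2 hcond.2.2⟩
      · rintro ⟨Q, Q'⟩ hqq hne
        rw [if_neg]
        rintro ⟨⟨hzT, hzQ⟩, hwT, hwQ'⟩
        have hoff2 := Finset.mem_offDiag.1 hqq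
        have h1 : Q = qq₀.1 := cube_unique ((hmemF Q).1 hoff2.1).1 hQ₀.1 hzQ hcond.1.2
        have h2 : Q' = qq₀.2 := cube_unique ((hmemF Q').1 hoff2.2.1).1 hQ₀'.1 hwQ' hcond.2.2
        exact hne (Prod.ext h1 h2)
      · intro h; exact absurd hqq₀ h
    · rw [Finset.sum_eq_zero]
      · exact Nat.zero_le _
      · intro qq hqq
        rw [if_neg (fun hc => hex ⟨qq, hqq, hc⟩)]
  have hcardoff : F.offDiag.card = N * N - N := by
    rw [Finset.offDiag_card, ← hNcard]
  have hNN : N * N ≤ 2 * (N * N - N) := by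
    have h4 : N * 2 ≤ N * N := Nat.mul_le_mul_left N h2
    omega
  calc b^2 * N^2 = (b*b) * (N*N) := by ring
    _ ≤ (b*b) * (2 * (N*N - N)) := Nat.mul_le_mul_left _ hNN
    _ = 2 * ((N*N - N) * (b*b)) := by ring
    _ = 2 * ∑ _qq ∈ F.offDiag, (b*b) := by rw [Finset.sum_const, smul_eq_mul, hcardoff]
    _ ≤ 2 * ∑ qq ∈ F.offDiag, (∑ z ∈ P.toFinset, ∑ w ∈ P.toFinset,
          if (z ∈ T ∧ z ∈ qq.1) ∧ (w ∈ T ∧ w ∈ qq.2) then P.count z * P.count w else 0) := by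
        apply Nat.mul_le_mul_left
        exact Finset.sum_le_sum key1
    _ ≤ 2 * ∑ z ∈ P.toFinset, ∑ w ∈ P.toFinset,
          (if z ∈ T ∧ w ∈ T ∧ Δ < dist z w then P.count z * P.count w else 0) :=
        Nat.mul_le_mul_left _ key2

end Aux

/-- weighted second-moment bound for rich tubes. -/
theorem statement0 :
    ∃ C : ℝ, 0 < C ∧
    ∀ (p : ℕ) [inst : Fact p.Prime] (n m : ℕ) (δ Δ : ℝ)
      (P : Multiset (ℤ_[p] × ℤ_[p])) (K : ℝ) (b : ℕ),
      δ = (p : ℝ) ^ (-(n : ℤ)) → Δ = (p : ℝ) ^ (-(m : ℤ)) → δ ≤ Δ → 1 ≤ b →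
      (∀ r : ℝ, Δ ≤ r → r ≤ 1 → ∀ x : ℤ_[p] × ℤ_[p],
        (mcount p P (Metric.closedBall x r) : ℝ) ≤ K * r * Multiset.card P) →
      ∑ᶠ T ∈ {T | T ∈ tubes p δ ∧ 2 ≤ NDb p Δ P b T}, ((NDb p Δ P b T : ℝ)) ^ 2 ≤
        C * K * Real.log (1 / Δ) * (Multiset.card P : ℝ) ^ 2 / (b : ℝ) ^ 2 := by
  refine ⟨3, by norm_num, ?_⟩
  intro p inst n m δ Δ P K b hδ hΔ hδΔ hb hK
  subst hδ hΔ
  have hp2 : 2 ≤ p := (Fact.out : p.Prime).two_le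
  have hp1 : (1:ℝ) < p := by exact_mod_cast (Fact.out : p.Prime).one_lt
  have hmn : m ≤ n := by
    have := (zpow_le_zpow_iff_right₀ hp1).1 hδΔ
    omega
  -- convert the finsum to a finite sum
  set Srich := (tubeFinset p n).filter
    (fun T => 2 ≤ NDb p ((p:ℝ)^(-(m:ℤ))) P b T) with hSrich_def
  have hseteq : {T | T ∈ tubes p ((p:ℝ)^(-(n:ℤ))) ∧ 2 ≤ NDb p ((p:ℝ)^(-(m:ℤ))) P b T}
      = (↑Srich : Set (Set (ℤ_[p] × ℤ_[p]))) := by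
    rw [hSrich_def, Finset.coe_filter, ← coe_tubeFinset]
    rfl
  rw [hseteq, finsum_mem_coe_finset]
  -- notation
  set cnt : (ℤ_[p] × ℤ_[p]) → ℕ := fun z => P.count z with hcnt_def
  set Wk : ℕ → ℕ := fun k => ∑ z ∈ P.toFinset, ∑ w ∈ P.toFinset,
    if dist z w = (p:ℝ)^(-(k:ℤ)) then cnt z * cnt w else 0 with hWk_def
  -- the natural number chain
  have hA : b^2 * ∑ T ∈ Srich, (NDb p ((p:ℝ)^(-(m:ℤ))) P b T)^2 ≤
      2 * ∑ T ∈ tubeFinset p n, ∑ z ∈ P.toFinset, ∑ w ∈ P.toFinset,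
        (if z ∈ T ∧ w ∈ T ∧ (p:ℝ)^(-(m:ℤ)) < dist z w then cnt z * cnt w else 0) := by
    rw [Finset.mul_sum]
    calc ∑ T ∈ Srich, b^2 * (NDb p ((p:ℝ)^(-(m:ℤ))) P b T)^2
        ≤ ∑ T ∈ Srich, 2 * ∑ z ∈ P.toFinset, ∑ w ∈ P.toFinset,
            (if z ∈ T ∧ w ∈ T ∧ (p:ℝ)^(-(m:ℤ)) < dist z w then cnt z * cnt w else 0) :=
          Finset.sum_le_sum fun T hT => stepA P b hb T (Finset.mem_filter.1 hT).2
      _ = 2 * ∑ T ∈ Srich, ∑ z ∈ P.toFinset, ∑ w ∈ P.toFinset,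
            (if z ∈ T ∧ w ∈ T ∧ (p:ℝ)^(-(m:ℤ)) < dist z w then cnt z * cnt w else 0) :=
          (Finset.mul_sum _ _ _).symm
      _ ≤ 2 * ∑ T ∈ tubeFinset p n, ∑ z ∈ P.toFinset, ∑ w ∈ P.toFinset,
            (if z ∈ T ∧ w ∈ T ∧ (p:ℝ)^(-(m:ℤ)) < dist z w then cnt z * cnt w else 0) :=
          Nat.mul_le_mul_left _ (Finset.sum_le_sum_of_subset (Finset.filter_subset _ _))
  have hB : ∑ T ∈ tubeFinset p n, ∑ z ∈ P.toFinset, ∑ w ∈ P.toFinset,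
        (if z ∈ T ∧ w ∈ T ∧ (p:ℝ)^(-(m:ℤ)) < dist z w then cnt z * cnt w else 0)
      ≤ ∑ k ∈ Finset.range m, p^k * Wk k := by
    have hswap : ∑ T ∈ tubeFinset p n, ∑ z ∈ P.toFinset, ∑ w ∈ P.toFinset,
        (if z ∈ T ∧ w ∈ T ∧ (p:ℝ)^(-(m:ℤ)) < dist z w then cnt z * cnt w else 0)
        = ∑ z ∈ P.toFinset, ∑ w ∈ P.toFinset,
          (if (p:ℝ)^(-(m:ℤ)) < dist z w then
            ((tubeFinset p n).filter (fun T => z ∈ T ∧ w ∈ T)).card * (cnt z * cnt w) else 0) := by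
      rw [Finset.sum_comm]
      refine Finset.sum_congr rfl fun z _ => ?_
      rw [Finset.sum_comm]
      refine Finset.sum_congr rfl fun w _ => ?_
      by_cases hD : (p:ℝ)^(-(m:ℤ)) < dist z w
      · rw [if_pos hD]
        have hfc : (tubeFinset p n).filter
              (fun T => z ∈ T ∧ w ∈ T ∧ (p:ℝ)^(-(m:ℤ)) < dist z w)
            = (tubeFinset p n).filter (fun T => z ∈ T ∧ w ∈ T) :=
          Finset.filter_congr (fun T _ => by tauto)
        rw [← Finset.sum_filter, hfc, Finset.sum_const, smul_eq_mul]
      · rw [if_neg hD, Finset.sum_eq_zero]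
        intro T _
        rw [if_neg (by tauto)]
    rw [hswap]
    have hpoint : ∀ z ∈ P.toFinset, ∀ w ∈ P.toFinset,
        (if (p:ℝ)^(-(m:ℤ)) < dist z w then
          ((tubeFinset p n).filter (fun T => z ∈ T ∧ w ∈ T)).card * (cnt z * cnt w) else 0)
        ≤ ∑ k ∈ Finset.range m,
          (if dist z w = (p:ℝ)^(-(k:ℤ)) then p^k * (cnt z * cnt w) else 0) := by
      intro z _ w _
      by_cases hD : (p:ℝ)^(-(m:ℤ)) < dist z w
      · rw [if_pos hD]
        have hpos : 0 < dist z w := lt_trans (zpow_pos (by positivity) _) hD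
        obtain ⟨k, hscale⟩ := exists_scale z w hpos
        have hkm : k < m := by
          rw [hscale] at hD
          have := (zpow_lt_zpow_iff_right₀ hp1).1 hD
          omega
        rw [Finset.sum_eq_single k]
        · rw [if_pos hscale]
          exact Nat.mul_le_mul_right _ (tubecount hmn hkm hscale)
        · intro j _ hjk
          rw [if_neg]
          intro hcon
          apply hjk
          have : (p:ℝ)^(-(j:ℤ)) = (p:ℝ)^(-(k:ℤ)) := by rw [← hcon, ← hscale]
          have := zpow_right_injective₀ (by positivity) (ne_of_gt hp1) this
          omega
        · intro hk'
          exact absurd (Finset.mem_range.2 hkm) hk'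
      · rw [if_neg hD]
        exact Nat.zero_le _
    calc ∑ z ∈ P.toFinset, ∑ w ∈ P.toFinset,
          (if (p:ℝ)^(-(m:ℤ)) < dist z w then
            ((tubeFinset p n).filter (fun T => z ∈ T ∧ w ∈ T)).card * (cnt z * cnt w) else 0)
        ≤ ∑ z ∈ P.toFinset, ∑ w ∈ P.toFinset, ∑ k ∈ Finset.range m,
            (if dist z w = (p:ℝ)^(-(k:ℤ)) then p^k * (cnt z * cnt w) else 0) :=
          Finset.sum_le_sum fun z hz => Finset.sum_le_sum fun w hw => hpoint z hz w hw
      _ = ∑ k ∈ Finset.range m, p^k * Wk k := by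
          rw [Finset.sum_congr rfl fun z (_ : z ∈ P.toFinset) => Finset.sum_comm]
          rw [Finset.sum_comm]
          refine Finset.sum_congr rfl fun k _ => ?_
          rw [hWk_def, Finset.mul_sum]
          refine Finset.sum_congr rfl fun z _ => ?_
          rw [Finset.mul_sum]
          refine Finset.sum_congr rfl fun w _ => ?_
          split_ifs <;> simp
  -- pass to the reals
  have hC : ∀ k ∈ Finset.range m, ((p^k * Wk k : ℕ) : ℝ) ≤ K * (Multiset.card P : ℝ)^2 := by
    intro k hk
    have hkm : k < m := Finset.mem_range.1 hk
    have hrΔ : (p:ℝ)^(-(m:ℤ)) ≤ (p:ℝ)^(-(k:ℤ)) :=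
      zpow_le_zpow_right₀ (le_of_lt hp1) (by omega)
    have hr1 : (p:ℝ)^(-(k:ℤ)) ≤ 1 := zpow_le_one_of_nonpos₀ (le_of_lt hp1) (by omega)
    have hinner : ∀ z : ℤ_[p] × ℤ_[p],
        (∑ w ∈ P.toFinset, if dist z w = (p:ℝ)^(-(k:ℤ)) then (cnt w : ℝ) else 0)
        ≤ K * (p:ℝ)^(-(k:ℤ)) * Multiset.card P := by
      intro z
      have h1 : (∑ w ∈ P.toFinset, if dist z w = (p:ℝ)^(-(k:ℤ)) then (cnt w : ℝ) else 0)
          ≤ (mcount p P (Metric.closedBall z ((p:ℝ)^(-(k:ℤ)))) : ℝ) := by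
        rw [mcount_eq_sum]
        push_cast
        refine Finset.sum_le_sum fun w _ => ?_
        by_cases hd : dist z w = (p:ℝ)^(-(k:ℤ))
        · rw [if_pos hd, if_pos (by rw [Metric.mem_closedBall, dist_comm]; exact le_of_eq hd)]
        · rw [if_neg hd]
          positivity
      exact h1.trans (hK _ hrΔ hr1 z)
    have hWkR : ((Wk k : ℕ) : ℝ) ≤
        (Multiset.card P : ℝ) * (K * (p:ℝ)^(-(k:ℤ)) * Multiset.card P) := by
      have hcast : ((Wk k : ℕ) : ℝ) = ∑ z ∈ P.toFinset, (cnt z : ℝ) *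
          (∑ w ∈ P.toFinset, if dist z w = (p:ℝ)^(-(k:ℤ)) then (cnt w : ℝ) else 0) := by
        rw [hWk_def]
        push_cast
        refine Finset.sum_congr rfl fun z _ => ?_
        rw [Finset.mul_sum]
        refine Finset.sum_congr rfl fun w _ => ?_
        split_ifs <;> simp
      rw [hcast]
      calc ∑ z ∈ P.toFinset, (cnt z : ℝ) *
            (∑ w ∈ P.toFinset, if dist z w = (p:ℝ)^(-(k:ℤ)) then (cnt w : ℝ) else 0)
          ≤ ∑ z ∈ P.toFinset, (cnt z : ℝ) * (K * (p:ℝ)^(-(k:ℤ)) * Multiset.card P) :=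
            Finset.sum_le_sum fun z _ =>
              mul_le_mul_of_nonneg_left (hinner z) (by positivity)
        _ = (∑ z ∈ P.toFinset, (cnt z : ℝ)) * (K * (p:ℝ)^(-(k:ℤ)) * Multiset.card P) := by
            rw [Finset.sum_mul]
        _ = (Multiset.card P : ℝ) * (K * (p:ℝ)^(-(k:ℤ)) * Multiset.card P) := by
            congr 1
            rw [card_eq_sum]
            push_cast
            rfl

    have hpp : ((p:ℝ)^(k:ℕ)) * (p:ℝ)^(-(k:ℤ)) = 1 := by
      rw [← zpow_natCast (p:ℝ) k, ← zpow_add₀ (by positivity : (p:ℝ) ≠ 0)]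
      simp
    push_cast
    calc ((p:ℝ)^(k:ℕ)) * (Wk k : ℝ)
        ≤ ((p:ℝ)^(k:ℕ)) * ((Multiset.card P : ℝ) * (K * (p:ℝ)^(-(k:ℤ)) * Multiset.card P)) :=
          mul_le_mul_of_nonneg_left hWkR (by positivity)
      _ = (K * (Multiset.card P : ℝ)^2) * (((p:ℝ)^(k:ℕ)) * (p:ℝ)^(-(k:ℤ))) := by ring
      _ = K * (Multiset.card P : ℝ)^2 := by rw [hpp, mul_one]
  -- combine
  have hmain : (b:ℝ)^2 * ∑ T ∈ Srich, ((NDb p ((p:ℝ)^(-(m:ℤ))) P b T : ℝ))^2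
      ≤ 2 * ((m:ℝ) * (K * (Multiset.card P : ℝ)^2)) := by
    have hNat : b^2 * ∑ T ∈ Srich, (NDb p ((p:ℝ)^(-(m:ℤ))) P b T)^2
        ≤ 2 * ∑ k ∈ Finset.range m, p^k * Wk k :=
      hA.trans (Nat.mul_le_mul_left 2 hB)
    have hcast : ((b^2 * ∑ T ∈ Srich, (NDb p ((p:ℝ)^(-(m:ℤ))) P b T)^2 : ℕ) : ℝ)
        = (b:ℝ)^2 * ∑ T ∈ Srich, ((NDb p ((p:ℝ)^(-(m:ℤ))) P b T : ℝ))^2 := by push_cast; rfl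
    calc (b:ℝ)^2 * ∑ T ∈ Srich, ((NDb p ((p:ℝ)^(-(m:ℤ))) P b T : ℝ))^2
        = ((b^2 * ∑ T ∈ Srich, (NDb p ((p:ℝ)^(-(m:ℤ))) P b T)^2 : ℕ) : ℝ) := hcast.symm
      _ ≤ ((2 * ∑ k ∈ Finset.range m, p^k * Wk k : ℕ) : ℝ) := by exact_mod_cast hNat
      _ = 2 * ∑ k ∈ Finset.range m, ((p^k * Wk k : ℕ) : ℝ) := by push_cast; ring
      _ ≤ 2 * ∑ k ∈ Finset.range m, (K * (Multiset.card P : ℝ)^2) := by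
          apply mul_le_mul_of_nonneg_left (Finset.sum_le_sum hC) (by norm_num)
      _ = 2 * ((m:ℝ) * (K * (Multiset.card P : ℝ)^2)) := by
          rw [Finset.sum_const, Finset.card_range, nsmul_eq_mul]
  -- the logarithm
  have hlog : Real.log (1 / (p:ℝ)^(-(m:ℤ))) = (m:ℝ) * Real.log p := by
    rw [one_div, ← zpow_neg, neg_neg, Real.log_zpow]
    push_cast
    ring
  -- final numeric step
  have hfinal : 2 * ((m:ℝ) * (K * (Multiset.card P : ℝ)^2))
      ≤ 3 * K * Real.log (1 / (p:ℝ)^(-(m:ℤ))) * (Multiset.card P : ℝ)^2 := by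
    rw [hlog]
    rcases eq_or_ne P 0 with rfl | hP
    · simp
    · have hPpos : 0 < (Multiset.card P : ℝ) := by
        have := Multiset.card_pos.2 hP
        exact_mod_cast this
      have hfull : (mcount p P (Metric.closedBall (0 : ℤ_[p] × ℤ_[p]) 1) : ℝ)
          = (Multiset.card P : ℝ) := by
        rw [mcount_eq_sum, card_eq_sum]
        push_cast
        refine Finset.sum_congr rfl fun z _ => ?_
        rw [if_pos]
        rw [Metric.mem_closedBall]
        exact dist_le_one' z 0
      have hK1 : 1 ≤ K := by
        have h := hK 1 (zpow_le_one_of_nonpos₀ (le_of_lt hp1) (by omega)) le_rfl 0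
        rw [hfull] at h
        nlinarith
      have hlp : (0.6931471803 : ℝ) < Real.log p :=
        lt_of_lt_of_le Real.log_two_gt_d9
          (Real.log_le_log (by norm_num) (by exact_mod_cast hp2))
      have hm0 : (0:ℝ) ≤ (m:ℝ) := Nat.cast_nonneg m
      have key : 2 * (m:ℝ) ≤ 3 * ((m:ℝ) * Real.log p) := by nlinarith
      calc 2 * ((m:ℝ) * (K * (Multiset.card P : ℝ)^2))
          = (2 * (m:ℝ)) * (K * (Multiset.card P : ℝ)^2) := by ring
        _ ≤ (3 * ((m:ℝ) * Real.log p)) * (K * (Multiset.card P : ℝ)^2) := by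
            apply mul_le_mul_of_nonneg_right key
            positivity
        _ = 3 * K * ((m:ℝ) * Real.log p) * (Multiset.card P : ℝ)^2 := by ring
  -- divide by b²
  have hbpos : (0:ℝ) < (b:ℝ)^2 := by
    have : (1:ℝ) ≤ (b:ℝ) := by exact_mod_cast hb
    positivity
  rw [le_div_iff₀ hbpos]
  calc (∑ T ∈ Srich, ((NDb p ((p:ℝ)^(-(m:ℤ))) P b T : ℝ))^2) * (b:ℝ)^2
      = (b:ℝ)^2 * ∑ T ∈ Srich, ((NDb p ((p:ℝ)^(-(m:ℤ))) P b T : ℝ))^2 := by ring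
    _ ≤ 2 * ((m:ℝ) * (K * (Multiset.card P : ℝ)^2)) := hmain
    _ ≤ 3 * K * Real.log (1 / (p:ℝ)^(-(m:ℤ))) * (Multiset.card P : ℝ)^2 := hfinal
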